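/- For every r ≥ 1 and every n ≥ 4r, if x and y are independent uniformly random elements of the symmetric group S_n, then the probability that there exist two distinct positive words u, u′ in two letters, each of length strictly less than r, with u(x,y) = u′(x,y), is at most 4^r · (4r/n)^⌊n/(4r)⌋. -/

import Mathlib

open Equiv Nat Finset

variable {n : ℕ}

def PInj (s : Finset (Fin n × Fin n)) : Prop :=
  (∀ q ∈ s, ∀ q' ∈ s, q.1 = q'.1 → q = q') ∧ (∀ q ∈ s, ∀ q' ∈ s, q.2 = q'.2 → q = q')

def ext1 (s : Finset (Fin n × Fin n)) : Finset (Perm (Fin n)) :=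
  Finset.univ.filter fun x => ∀ q ∈ s, x q.1 = q.2

theorem ext1_card {s : Finset (Fin n × Fin n)} (hs : PInj s) :
    (ext1 s).card = (n - s.card)! := by
  classical
  set d : Finset (Fin n) := s.image Prod.fst with hd
  set e : Finset (Fin n) := s.image Prod.snd with he
  have huniq : ∀ a : Fin n, a ∈ d → ∃! q, q ∈ s ∧ q.1 = a := by
    intro a ha
    rw [hd, mem_image] at ha
    obtain ⟨q, hq, hqa⟩ := ha
    exact ⟨q, ⟨hq, hqa⟩, fun q' ⟨hq', hq'a⟩ => hs.1 q' hq' q hq (hq'a.trans hqa.symm)⟩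
  have hF : ∀ a : (↑d : Set (Fin n)), ((s.choose _ (huniq a a.2)).2 : Fin n) ∈ e := by
    intro a
    rw [he, mem_image]
    exact ⟨_, s.choose_mem _ (huniq a a.2), rfl⟩
  set F : (↑d : Set (Fin n)) → (↑e : Set (Fin n)) := fun a => ⟨_, hF a⟩ with hFdef
  have hFbij : Function.Bijective F := by
    constructor
    · intro a a' h
      have h1 := s.choose_mem _ (huniq a a.2)
      have h2 := s.choose_mem _ (huniq a' a'.2)
      have := hs.2 _ h1 _ h2 (congrArg Subtype.val h)
      have ha := s.choose_property _ (huniq a a.2)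
      have ha' := s.choose_property _ (huniq a' a'.2)
      apply Subtype.ext
      rw [← ha, ← ha', this]
    · rintro ⟨b, hb⟩
      rw [he] at hb
      rw [Finset.mem_coe, mem_image] at hb
      obtain ⟨q, hq, hqb⟩ := hb
      have haq : q.1 ∈ d := by rw [hd, mem_image]; exact ⟨q, hq, rfl⟩
      refine ⟨⟨q.1, haq⟩, ?_⟩
      apply Subtype.ext
      have h1 := s.choose_mem _ (huniq q.1 haq)
      have h2 := s.choose_property _ (huniq q.1 haq)
      have : s.choose _ (huniq q.1 haq) = q := hs.1 _ h1 _ hq h2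
      simp only [hFdef, this, hqb]
  set e₀ : (↑d : Set (Fin n)) ≃ (↑e : Set (Fin n)) := Equiv.ofBijective F hFbij with he₀
  have key : ∀ x : Perm (Fin n), (∀ q ∈ s, x q.1 = q.2) ↔ (∀ a : (↑d : Set (Fin n)), x ↑a = ↑(e₀ a)) := by
    intro x
    constructor
    · intro h a
      have h1 := s.choose_mem _ (huniq a a.2)
      have h2 := s.choose_property _ (huniq a a.2)
      have h3 := h _ h1
      rw [h2] at h3
      exact h3
    · intro h q hq
      have haq : q.1 ∈ d := by rw [hd, mem_image]; exact ⟨q, hq, rfl⟩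
      have := h ⟨q.1, haq⟩
      have h1 := s.choose_mem _ (huniq q.1 haq)
      have h2 := s.choose_property _ (huniq q.1 haq)
      have hqe : s.choose _ (huniq q.1 haq) = q := hs.1 _ h1 _ hq h2
      rw [this]
      show ((s.choose _ (huniq q.1 haq)).2 : Fin n) = q.2
      rw [hqe]
  have hcard1 : (ext1 s).card = Fintype.card {x : Perm (Fin n) // ∀ q ∈ s, x q.1 = q.2} := by
    rw [Fintype.card_subtype]; rfl
  have hcard2 : Fintype.card {x : Perm (Fin n) // ∀ q ∈ s, x q.1 = q.2}
      = Fintype.card {x : Perm (Fin n) // ∀ a : (↑d : Set (Fin n)), x ↑a = ↑(e₀ a)} :=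
    Fintype.card_congr (Equiv.subtypeEquivRight key)
  have hcard3 : Fintype.card {x : Perm (Fin n) // ∀ a : (↑d : Set (Fin n)), x ↑a = ↑(e₀ a)}
      = Fintype.card (((↑d : Set (Fin n))ᶜ : Set (Fin n)) ≃ ((↑e : Set (Fin n))ᶜ : Set (Fin n))) :=
    Fintype.card_congr (Equiv.Set.compl e₀)
  have hde : d.card = s.card := Finset.card_image_of_injOn (fun q hq q' hq' h => hs.1 q hq q' hq' h)
  have hee : e.card = s.card := Finset.card_image_of_injOn (fun q hq q' hq' h => hs.2 q hq q' hq' h)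
  have hcd : Fintype.card ((↑d : Set (Fin n))ᶜ : Set (Fin n)) = n - s.card := by
    rw [Fintype.card_compl_set]
    simp [hde]
  have hce : Fintype.card ((↑e : Set (Fin n))ᶜ : Set (Fin n)) = n - s.card := by
    rw [Fintype.card_compl_set]
    simp [hee]
  have hcard4 : Fintype.card (((↑d : Set (Fin n))ᶜ : Set (Fin n)) ≃ ((↑e : Set (Fin n))ᶜ : Set (Fin n)))
      = (n - s.card)! := by
    rw [Fintype.card_equiv (Fintype.equivOfCardEq (hcd.trans hce.symm)), hcd]
  rw [hcard1, hcard2, hcard3, hcard4]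

def ExtP (s t : Finset (Fin n × Fin n)) : Finset (Perm (Fin n) × Perm (Fin n)) :=
  Finset.univ.filter fun z => (∀ q ∈ s, z.1 q.1 = q.2) ∧ (∀ q ∈ t, z.2 q.1 = q.2)

theorem mem_ExtP {s t : Finset (Fin n × Fin n)} {z : Perm (Fin n) × Perm (Fin n)} :
    z ∈ ExtP s t ↔ (∀ q ∈ s, z.1 q.1 = q.2) ∧ (∀ q ∈ t, z.2 q.1 = q.2) := by
  rw [ExtP, Finset.mem_filter]
  exact ⟨fun h => h.2, fun h => ⟨Finset.mem_univ _, h⟩⟩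

structure Mv where
  ltr : Bool
  fwd : Bool
deriving DecidableEq

def applyMv (z : Perm (Fin n) × Perm (Fin n)) (m : Mv) (c : Fin n) : Fin n :=
  if m.fwd then (if m.ltr then z.1 else z.2) c else (if m.ltr then z.1 else z.2)⁻¹ c

def walk (z : Perm (Fin n) × Perm (Fin n)) : List Mv → Fin n → Fin n
  | [], c => c
  | m :: M, c => walk z M (applyMv z m c)

theorem walk_append (z : Perm (Fin n) × Perm (Fin n)) (M₁ M₂ : List Mv) (c : Fin n) :
    walk z (M₁ ++ M₂) c = walk z M₂ (walk z M₁ c) := by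
  induction M₁ generalizing c with
  | nil => rfl
  | cons m M ih => simp [walk, ih]

def Phased : List Mv → Prop
  | [] => True
  | m :: M => Phased M ∧ (m.fwd = false → ∀ m' ∈ M, m'.fwd = false)

theorem pinj_insert_cases {s : Finset (Fin n × Fin n)} (hs : PInj s) (c b : Fin n) :
    (c, b) ∈ s ∨ (PInj (insert (c, b) s) ∧ (insert (c, b) s).card = s.card + 1) ∨
      (∃ q ∈ s, (q.1 = c ∧ q.2 ≠ b) ∨ (q.2 = b ∧ q.1 ≠ c)) := by
  classical
  by_cases h1 : ∃ q ∈ s, q.1 = c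
  · obtain ⟨q, hq, hqc⟩ := h1
    by_cases h2 : q.2 = b
    · left; have : q = (c, b) := Prod.ext hqc h2; rwa [this] at hq
    · right; right; exact ⟨q, hq, Or.inl ⟨hqc, h2⟩⟩
  · by_cases h2 : ∃ q ∈ s, q.2 = b
    · obtain ⟨q, hq, hqb⟩ := h2
      right; right; refine ⟨q, hq, Or.inr ⟨hqb, fun hc => h1 ⟨q, hq, hc⟩⟩⟩
    · right; left
      push_neg at h1 h2
      constructor
      · constructor
        · intro q hq q' hq' hh
          rcases Finset.mem_insert.1 hq with rfl | hq <;>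
            rcases Finset.mem_insert.1 hq' with rfl | hq'
          · rfl
          · exact absurd hh.symm (h1 q' hq')
          · exact absurd hh (h1 q hq)
          · exact hs.1 q hq q' hq' hh
        · intro q hq q' hq' hh
          rcases Finset.mem_insert.1 hq with rfl | hq <;>
            rcases Finset.mem_insert.1 hq' with rfl | hq'
          · rfl
          · exact absurd hh.symm (h2 q' hq')
          · exact absurd hh (h2 q hq)
          · exact hs.2 q hq q' hq' hh
      · exact Finset.card_insert_of_notMem (fun hmem => h1 _ hmem rfl)

theorem ExtP_empty_left {s t : Finset (Fin n × Fin n)} {c b : Fin n}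
    (h : ∃ q ∈ s, (q.1 = c ∧ q.2 ≠ b) ∨ (q.2 = b ∧ q.1 ≠ c)) :
    ExtP (insert (c, b) s) t = ∅ := by
  obtain ⟨q, hq, hcase⟩ := h
  rw [Finset.eq_empty_iff_forall_notMem]
  intro z hz
  rw [mem_ExtP] at hz
  have hcb : z.1 c = b := hz.1 _ (Finset.mem_insert_self _ _)
  have hqe : z.1 q.1 = q.2 := hz.1 _ (Finset.mem_insert_of_mem hq)
  rcases hcase with ⟨h1, h2⟩ | ⟨h1, h2⟩
  · rw [h1, hcb] at hqe; exact h2 hqe.symm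
  · rw [h1, ← hcb] at hqe; exact h2 (z.1.injective hqe)

theorem ExtP_empty_right {s t : Finset (Fin n × Fin n)} {c b : Fin n}
    (h : ∃ q ∈ t, (q.1 = c ∧ q.2 ≠ b) ∨ (q.2 = b ∧ q.1 ≠ c)) :
    ExtP s (insert (c, b) t) = ∅ := by
  obtain ⟨q, hq, hcase⟩ := h
  rw [Finset.eq_empty_iff_forall_notMem]
  intro z hz
  rw [mem_ExtP] at hz
  have hcb : z.2 c = b := hz.2 _ (Finset.mem_insert_self _ _)
  have hqe : z.2 q.1 = q.2 := hz.2 _ (Finset.mem_insert_of_mem hq)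
  rcases hcase with ⟨h1, h2⟩ | ⟨h1, h2⟩
  · rw [h1, hcb] at hqe; exact h2 hqe.symm
  · rw [h1, ← hcb] at hqe; exact h2 (z.2.injective hqe)

/-- admissible set for a fresh value -/
theorem card_compl_snd {s : Finset (Fin n × Fin n)} (hs : PInj s) :
    (Finset.univ.filter fun b : Fin n => ∀ q ∈ s, q.2 ≠ b).card = n - s.card := by
  classical
  have : (Finset.univ.filter fun b : Fin n => ∀ q ∈ s, q.2 ≠ b)
      = Finset.univ \ s.image Prod.snd := by
    ext b
    simp only [Finset.mem_filter, Finset.mem_univ, true_and, Finset.mem_sdiff, Finset.mem_image]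
    constructor
    · intro h
      rintro ⟨q, hq, rfl⟩
      exact h q hq rfl
    · intro h q hq hqb
      exact h ⟨q, hq, hqb⟩
  rw [this, Finset.card_sdiff_of_subset (Finset.subset_univ _), Finset.card_univ, Fintype.card_fin,
    Finset.card_image_of_injOn (fun q hq q' hq' h => hs.2 q hq q' hq' h)]

theorem card_compl_fst {s : Finset (Fin n × Fin n)} (hs : PInj s) :
    (Finset.univ.filter fun b : Fin n => ∀ q ∈ s, q.1 ≠ b).card = n - s.card := by
  classical
  have : (Finset.univ.filter fun b : Fin n => ∀ q ∈ s, q.1 ≠ b)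
      = Finset.univ \ s.image Prod.fst := by
    ext b
    simp only [Finset.mem_filter, Finset.mem_univ, true_and, Finset.mem_sdiff, Finset.mem_image]
    constructor
    · intro h
      rintro ⟨q, hq, rfl⟩
      exact h q hq rfl
    · intro h q hq hqb
      exact h ⟨q, hq, hqb⟩
  rw [this, Finset.card_sdiff_of_subset (Finset.subset_univ _), Finset.card_univ, Fintype.card_fin,
    Finset.card_image_of_injOn (fun q hq q' hq' h => hs.1 q hq q' hq' h)]

theorem sum_bound (p : Fin n) (f : Fin n → ℕ) (A : Finset (Fin n)) (P Q : ℝ)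
    (hQ : 0 ≤ Q) (hP : (f p : ℝ) ≤ P)
    (h0 : ∀ b, b ≠ p → b ∉ A → f b = 0)
    (hq : ∀ b, b ≠ p → (f b : ℝ) ≤ Q) :
    ((∑ b : Fin n, f b : ℕ) : ℝ) ≤ P + A.card * Q := by
  classical
  have hsplit : (∑ b : Fin n, f b) = f p + ∑ b ∈ Finset.univ.erase p, f b :=
    (Finset.add_sum_erase _ f (Finset.mem_univ p)).symm
  have hsub : ∑ b ∈ Finset.univ.erase p, f b = ∑ b ∈ A.erase p, f b := by
    refine (Finset.sum_subset (Finset.erase_subset_erase p (Finset.subset_univ A)) ?_).symm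
    intro b hb hnb
    rcases Finset.mem_erase.1 hb with ⟨hbp, -⟩
    refine h0 b hbp ?_
    intro hbA
    exact hnb (Finset.mem_erase.2 ⟨hbp, hbA⟩)
  have hbound : (∑ b ∈ A.erase p, (f b : ℝ)) ≤ ((A.erase p).card : ℝ) * Q := by
    refine le_trans (Finset.sum_le_card_nsmul _ _ Q ?_) ?_
    · intro b hb
      exact hq b (Finset.mem_erase.1 hb).1
    · rw [nsmul_eq_mul]
  have hcard : ((A.erase p).card : ℝ) ≤ A.card := by
    exact_mod_cast Finset.card_le_card (Finset.erase_subset _ _)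
  have h2 : (∑ b ∈ A.erase p, (f b : ℝ)) ≤ (A.card : ℝ) * Q :=
    le_trans hbound (mul_le_mul_of_nonneg_right hcard hQ)
  rw [hsplit, hsub]
  push_cast
  linarith

theorem fact_step {k K : ℕ} (hk : k < n) (hKk : k ≤ K) (hKn : K < n) :
    (((n - (k + 1))! : ℕ) : ℝ) ≤ ((n - k)! : ℕ) / ((n : ℝ) - K) := by
  have hpos : (0:ℝ) < (n : ℝ) - K := by
    have : (K : ℝ) < n := by exact_mod_cast hKn
    linarith
  rw [le_div_iff₀ hpos]
  set j := n - (k + 1) with hjdef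
  have hj : n - k = j + 1 := by omega
  have h2 : (n - k)! = (j + 1) * j ! := by rw [hj, Nat.factorial_succ]
  have hcast : ((j : ℝ) + 1) = (n : ℝ) - k := by
    have h3 : ((n - k : ℕ) : ℝ) = (n : ℝ) - k := by
      rw [Nat.cast_sub (le_of_lt hk)]
    rw [← h3, hj]
    push_cast
    ring
  have hKle : (n : ℝ) - K ≤ (n : ℝ) - k := by
    have : (k : ℝ) ≤ K := by exact_mod_cast hKk
    linarith
  have hfnn : (0:ℝ) ≤ (j ! : ℕ) := Nat.cast_nonneg _
  calc ((j ! : ℕ) : ℝ) * ((n:ℝ) - K) ≤ ((j ! : ℕ) : ℝ) * ((n:ℝ) - k) := by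
        exact mul_le_mul_of_nonneg_left hKle hfnn
    _ = ((j:ℝ) + 1) * ((j ! : ℕ) : ℝ) := by rw [hcast]; ring
    _ = (((n - k)! : ℕ) : ℝ) := by rw [h2]; push_cast; ring

theorem ExtP_card {s t : Finset (Fin n × Fin n)} (hs : PInj s) (ht : PInj t) :
    (ExtP s t).card = (n - s.card)! * (n - t.card)! := by
  classical
  have hprod : ExtP s t = ext1 s ×ˢ ext1 t := by
    ext z
    rw [mem_ExtP, Finset.mem_product]
    simp [ext1]
  rw [hprod, Finset.card_product, ext1_card hs, ext1_card ht]

theorem fiber_fwd_left {G : Finset (Perm (Fin n) × Perm (Fin n))} {s t : Finset (Fin n × Fin n)}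
    {m : Mv} (hl : m.ltr = true) (hf : m.fwd = true) (M' : List Mv) (c b p : Fin n) :
    ((G ∩ ExtP s t).filter fun z => walk z (m :: M') c = p ∧ z.1 c = b)
      = (G ∩ ExtP (insert (c, b) s) t).filter fun z => walk z M' b = p := by
  ext z
  simp only [Finset.mem_filter, Finset.mem_inter, mem_ExtP, Finset.forall_mem_insert]
  constructor
  · rintro ⟨⟨hG, hs1, ht1⟩, hwalk, hcb⟩
    have happ : applyMv z m c = b := by simp [applyMv, hl, hf, hcb]
    simp only [walk, happ] at hwalk
    exact ⟨⟨hG, ⟨hcb, hs1⟩, ht1⟩, hwalk⟩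
  · rintro ⟨⟨hG, ⟨hcb, hs1⟩, ht1⟩, hwalk⟩
    have happ : applyMv z m c = b := by simp [applyMv, hl, hf, hcb]
    refine ⟨⟨hG, hs1, ht1⟩, ?_, hcb⟩
    simp only [walk, happ]
    exact hwalk

theorem fiber_fwd_right {G : Finset (Perm (Fin n) × Perm (Fin n))} {s t : Finset (Fin n × Fin n)}
    {m : Mv} (hl : m.ltr = false) (hf : m.fwd = true) (M' : List Mv) (c b p : Fin n) :
    ((G ∩ ExtP s t).filter fun z => walk z (m :: M') c = p ∧ z.2 c = b)
      = (G ∩ ExtP s (insert (c, b) t)).filter fun z => walk z M' b = p := by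
  ext z
  simp only [Finset.mem_filter, Finset.mem_inter, mem_ExtP, Finset.forall_mem_insert]
  constructor
  · rintro ⟨⟨hG, hs1, ht1⟩, hwalk, hcb⟩
    have happ : applyMv z m c = b := by simp [applyMv, hl, hf, hcb]
    simp only [walk, happ] at hwalk
    exact ⟨⟨hG, hs1, hcb, ht1⟩, hwalk⟩
  · rintro ⟨⟨hG, hs1, hcb, ht1⟩, hwalk⟩
    have happ : applyMv z m c = b := by simp [applyMv, hl, hf, hcb]
    refine ⟨⟨hG, hs1, ht1⟩, ?_, hcb⟩
    simp only [walk, happ]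
    exact hwalk

theorem inv_fiber {x : Perm (Fin n)} {c a : Fin n} : x⁻¹ c = a ↔ x a = c := by
  constructor
  · intro h; rw [← h]; simp
  · intro h; rw [← h]; simp

theorem fiber_bwd_left {G : Finset (Perm (Fin n) × Perm (Fin n))} {s t : Finset (Fin n × Fin n)}
    {m : Mv} (hl : m.ltr = true) (hf : m.fwd = false) (M' : List Mv) (c a p : Fin n) :
    ((G ∩ ExtP s t).filter fun z => walk z (m :: M') c = p ∧ z.1⁻¹ c = a)
      = (G ∩ ExtP (insert (a, c) s) t).filter fun z => walk z M' a = p := by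
  ext z
  simp only [Finset.mem_filter, Finset.mem_inter, mem_ExtP, Finset.forall_mem_insert]
  constructor
  · rintro ⟨⟨hG, hs1, ht1⟩, hwalk, hca⟩
    have happ : applyMv z m c = a := by simp [applyMv, hl, hf, hca]
    simp only [walk, happ] at hwalk
    exact ⟨⟨hG, ⟨inv_fiber.1 hca, hs1⟩, ht1⟩, hwalk⟩
  · rintro ⟨⟨hG, ⟨hca, hs1⟩, ht1⟩, hwalk⟩
    have hca' : z.1⁻¹ c = a := inv_fiber.2 hca
    have happ : applyMv z m c = a := by simp [applyMv, hl, hf, hca']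
    refine ⟨⟨hG, hs1, ht1⟩, ?_, hca'⟩
    simp only [walk, happ]
    exact hwalk

theorem fiber_bwd_right {G : Finset (Perm (Fin n) × Perm (Fin n))} {s t : Finset (Fin n × Fin n)}
    {m : Mv} (hl : m.ltr = false) (hf : m.fwd = false) (M' : List Mv) (c a p : Fin n) :
    ((G ∩ ExtP s t).filter fun z => walk z (m :: M') c = p ∧ z.2⁻¹ c = a)
      = (G ∩ ExtP s (insert (a, c) t)).filter fun z => walk z M' a = p := by
  ext z
  simp only [Finset.mem_filter, Finset.mem_inter, mem_ExtP, Finset.forall_mem_insert]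
  constructor
  · rintro ⟨⟨hG, hs1, ht1⟩, hwalk, hca⟩
    have happ : applyMv z m c = a := by simp [applyMv, hl, hf, hca]
    simp only [walk, happ] at hwalk
    exact ⟨⟨hG, hs1, inv_fiber.1 hca, ht1⟩, hwalk⟩
  · rintro ⟨⟨hG, hs1, hca, ht1⟩, hwalk⟩
    have hca' : z.2⁻¹ c = a := inv_fiber.2 hca
    have happ : applyMv z m c = a := by simp [applyMv, hl, hf, hca']
    refine ⟨⟨hG, hs1, ht1⟩, ?_, hca'⟩
    simp only [walk, happ]
    exact hwalk

theorem det_fwd_left {G : Finset (Perm (Fin n) × Perm (Fin n))} {s t : Finset (Fin n × Fin n)}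
    {m : Mv} (hl : m.ltr = true) (hf : m.fwd = true) {c b : Fin n} (hq : (c, b) ∈ s)
    (M' : List Mv) (p : Fin n) :
    ((G ∩ ExtP s t).filter fun z => walk z (m :: M') c = p)
      = (G ∩ ExtP s t).filter fun z => walk z M' b = p := by
  ext z
  simp only [Finset.mem_filter, Finset.mem_inter, mem_ExtP]
  constructor
  · rintro ⟨⟨hG, hs1, ht1⟩, hwalk⟩
    have happ : applyMv z m c = b := by simp [applyMv, hl, hf, hs1 _ hq]
    simp only [walk, happ] at hwalk
    exact ⟨⟨hG, hs1, ht1⟩, hwalk⟩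
  · rintro ⟨⟨hG, hs1, ht1⟩, hwalk⟩
    have happ : applyMv z m c = b := by simp [applyMv, hl, hf, hs1 _ hq]
    refine ⟨⟨hG, hs1, ht1⟩, ?_⟩
    simp only [walk, happ]
    exact hwalk

theorem det_fwd_right {G : Finset (Perm (Fin n) × Perm (Fin n))} {s t : Finset (Fin n × Fin n)}
    {m : Mv} (hl : m.ltr = false) (hf : m.fwd = true) {c b : Fin n} (hq : (c, b) ∈ t)
    (M' : List Mv) (p : Fin n) :
    ((G ∩ ExtP s t).filter fun z => walk z (m :: M') c = p)
      = (G ∩ ExtP s t).filter fun z => walk z M' b = p := by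
  ext z
  simp only [Finset.mem_filter, Finset.mem_inter, mem_ExtP]
  constructor
  · rintro ⟨⟨hG, hs1, ht1⟩, hwalk⟩
    have happ : applyMv z m c = b := by simp [applyMv, hl, hf, ht1 _ hq]
    simp only [walk, happ] at hwalk
    exact ⟨⟨hG, hs1, ht1⟩, hwalk⟩
  · rintro ⟨⟨hG, hs1, ht1⟩, hwalk⟩
    have happ : applyMv z m c = b := by simp [applyMv, hl, hf, ht1 _ hq]
    refine ⟨⟨hG, hs1, ht1⟩, ?_⟩
    simp only [walk, happ]
    exact hwalk

theorem det_bwd_left {G : Finset (Perm (Fin n) × Perm (Fin n))} {s t : Finset (Fin n × Fin n)}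
    {m : Mv} (hl : m.ltr = true) (hf : m.fwd = false) {c a : Fin n} (hq : (a, c) ∈ s)
    (M' : List Mv) (p : Fin n) :
    ((G ∩ ExtP s t).filter fun z => walk z (m :: M') c = p)
      = (G ∩ ExtP s t).filter fun z => walk z M' a = p := by
  ext z
  simp only [Finset.mem_filter, Finset.mem_inter, mem_ExtP]
  constructor
  · rintro ⟨⟨hG, hs1, ht1⟩, hwalk⟩
    have happ : applyMv z m c = a := by
      simp [applyMv, hl, hf, inv_fiber.2 (hs1 _ hq)]
    simp only [walk, happ] at hwalk
    exact ⟨⟨hG, hs1, ht1⟩, hwalk⟩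
  · rintro ⟨⟨hG, hs1, ht1⟩, hwalk⟩
    have happ : applyMv z m c = a := by
      simp [applyMv, hl, hf, inv_fiber.2 (hs1 _ hq)]
    refine ⟨⟨hG, hs1, ht1⟩, ?_⟩
    simp only [walk, happ]
    exact hwalk

theorem det_bwd_right {G : Finset (Perm (Fin n) × Perm (Fin n))} {s t : Finset (Fin n × Fin n)}
    {m : Mv} (hl : m.ltr = false) (hf : m.fwd = false) {c a : Fin n} (hq : (a, c) ∈ t)
    (M' : List Mv) (p : Fin n) :
    ((G ∩ ExtP s t).filter fun z => walk z (m :: M') c = p)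
      = (G ∩ ExtP s t).filter fun z => walk z M' a = p := by
  ext z
  simp only [Finset.mem_filter, Finset.mem_inter, mem_ExtP]
  constructor
  · rintro ⟨⟨hG, hs1, ht1⟩, hwalk⟩
    have happ : applyMv z m c = a := by
      simp [applyMv, hl, hf, inv_fiber.2 (ht1 _ hq)]
    simp only [walk, happ] at hwalk
    exact ⟨⟨hG, hs1, ht1⟩, hwalk⟩
  · rintro ⟨⟨hG, hs1, ht1⟩, hwalk⟩
    have happ : applyMv z m c = a := by
      simp [applyMv, hl, hf, inv_fiber.2 (ht1 _ hq)]
    refine ⟨⟨hG, hs1, ht1⟩, ?_⟩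
    simp only [walk, happ]
    exact hwalk
theorem getLast?_cons_ne {m : Mv} {M : List Mv} (h : M ≠ []) :
    (m :: M).getLast? = M.getLast? := by
  cases M with
  | nil => exact absurd rfl h
  | cons a l => exact List.getLast?_cons_cons

theorem recLemma (p : Fin n) (g₁ : Bool) (K : ℕ) (G : Finset (Perm (Fin n) × Perm (Fin n)))
    (β : ℝ) (hβ : 0 ≤ β) (hn : 0 < n) (hK2 : 2 * K ≤ n)
    (hpay : ∀ s t : Finset (Fin n × Fin n), PInj s → PInj t → s.card + t.card ≤ K →
      ((G ∩ ExtP s t).card : ℝ) ≤ β * (((n - s.card)! : ℕ) : ℝ) * (((n - t.card)! : ℕ) : ℝ)) :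
    ∀ M : List Mv, M ≠ [] → ∀ s t : Finset (Fin n × Fin n), ∀ c : Fin n,
      PInj s → PInj t →
      s.card + t.card + M.length ≤ K →
      Phased M →
      (∀ m' ∈ M.getLast?, m'.fwd = false → m'.ltr ≠ g₁) →
      (∀ b : Fin n, ((p, b) ∈ s → g₁ = true) ∧ ((p, b) ∈ t → g₁ = false)) →
      ((∃ m' ∈ M, m'.fwd = true) → ∀ a : Fin n, (a, p) ∉ s ∧ (a, p) ∉ t) →
      (c = p → (∃ m' ∈ M, m'.fwd = true) →
        (∀ m' ∈ M.head?, m'.ltr = g₁) ∧ ∀ b : Fin n, (p, b) ∉ s ∧ (p, b) ∉ t) →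
      (((G ∩ ExtP s t).filter fun z => walk z M c = p).card : ℝ) ≤
        (M.length : ℝ) * β * (((n - s.card)! : ℕ) : ℝ) * (((n - t.card)! : ℕ) : ℝ) / ((n:ℝ) - K) := by
  intro M
  induction M with
  | nil => intro h; exact absurd rfl h
  | cons m M' ih =>
    intro _ s t c hs ht hsize hph hlast hA hVp hDp
    have hKn : K < n := by omega
    have hnK : (0:ℝ) < (n:ℝ) - K := by
      have : (K:ℝ) < (n:ℝ) := by exact_mod_cast hKn
      linarith
    have hsizes : s.card + 1 + t.card + M'.length ≤ K := by
      simp only [List.length_cons] at hsize; omega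
    have hsn : s.card < n := by omega
    have htn : t.card < n := by omega
    have hF1 : (0:ℝ) ≤ (((n - s.card)! : ℕ) : ℝ) := Nat.cast_nonneg _
    have hF2 : (0:ℝ) ≤ (((n - t.card)! : ℕ) : ℝ) := Nat.cast_nonneg _
    have hG1 : (0:ℝ) ≤ (((n - (s.card + 1))! : ℕ) : ℝ) := Nat.cast_nonneg _
    have hG2 : (0:ℝ) ≤ (((n - (t.card + 1))! : ℕ) : ℝ) := Nat.cast_nonneg _
    have hRHS : (0:ℝ) ≤ ((m :: M').length : ℝ) * β * (((n - s.card)! : ℕ) : ℝ)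
        * (((n - t.card)! : ℕ) : ℝ) / ((n:ℝ) - K) := by
      apply div_nonneg _ hnK.le
      exact mul_nonneg (mul_nonneg (mul_nonneg (Nat.cast_nonneg _) hβ) hF1) hF2
    have hmono : (M'.length : ℝ) * β * (((n - s.card)! : ℕ) : ℝ) * (((n - t.card)! : ℕ) : ℝ)
          / ((n:ℝ) - K)
        ≤ ((m :: M').length : ℝ) * β * (((n - s.card)! : ℕ) : ℝ) * (((n - t.card)! : ℕ) : ℝ)
          / ((n:ℝ) - K) := by
      rw [div_eq_mul_inv, div_eq_mul_inv]
      apply mul_le_mul_of_nonneg_right _ (inv_nonneg.2 hnK.le)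
      have h2 : (0:ℝ) ≤ β * (((n - s.card)! : ℕ) : ℝ) * (((n - t.card)! : ℕ) : ℝ) :=
        mul_nonneg (mul_nonneg hβ hF1) hF2
      have hlen : (M'.length : ℝ) ≤ ((m :: M').length : ℝ) := by
        simp [List.length_cons]
      nlinarith [h2, hlen]
    have hpayL : ∀ S' : Finset (Fin n × Fin n), PInj S' → S'.card = s.card + 1 →
        ((G ∩ ExtP S' t).card : ℝ)
          ≤ β * (((n - (s.card+1))! : ℕ) : ℝ) * (((n - t.card)! : ℕ) : ℝ) := by
      intro S' hPI hcard
      have hb := hpay S' t hPI ht (by omega)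
      rwa [hcard] at hb
    have hpayR : ∀ T' : Finset (Fin n × Fin n), PInj T' → T'.card = t.card + 1 →
        ((G ∩ ExtP s T').card : ℝ)
          ≤ β * (((n - s.card)! : ℕ) : ℝ) * (((n - (t.card+1))! : ℕ) : ℝ) := by
      intro T' hPI hcard
      have hb := hpay s T' hs hPI (by omega)
      rwa [hcard] at hb
    have hfsL : (((n - (s.card+1))! : ℕ) : ℝ) ≤ (((n - s.card)! : ℕ) : ℝ) / ((n:ℝ) - K) :=
      fact_step hsn (by omega) hKn
    have hfsR : (((n - (t.card+1))! : ℕ) : ℝ) ≤ (((n - t.card)! : ℕ) : ℝ) / ((n:ℝ) - K) :=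
      fact_step htn (by omega) hKn
    have hPleL : β * (((n - (s.card+1))! : ℕ) : ℝ) * (((n - t.card)! : ℕ) : ℝ)
        ≤ β * (((n - s.card)! : ℕ) : ℝ) * (((n - t.card)! : ℕ) : ℝ) / ((n:ℝ) - K) := by
      calc β * (((n - (s.card+1))! : ℕ) : ℝ) * (((n - t.card)! : ℕ) : ℝ)
          ≤ β * ((((n - s.card)! : ℕ) : ℝ) / ((n:ℝ) - K)) * (((n - t.card)! : ℕ) : ℝ) := by
            exact mul_le_mul_of_nonneg_right (mul_le_mul_of_nonneg_left hfsL hβ) hF2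
        _ = β * (((n - s.card)! : ℕ) : ℝ) * (((n - t.card)! : ℕ) : ℝ) / ((n:ℝ) - K) := by
            ring
    have hPleR : β * (((n - s.card)! : ℕ) : ℝ) * (((n - (t.card+1))! : ℕ) : ℝ)
        ≤ β * (((n - s.card)! : ℕ) : ℝ) * (((n - t.card)! : ℕ) : ℝ) / ((n:ℝ) - K) := by
      calc β * (((n - s.card)! : ℕ) : ℝ) * (((n - (t.card+1))! : ℕ) : ℝ)
          ≤ β * (((n - s.card)! : ℕ) : ℝ) * ((((n - t.card)! : ℕ) : ℝ) / ((n:ℝ) - K)) := by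
            exact mul_le_mul_of_nonneg_left hfsR (mul_nonneg hβ hF1)
        _ = β * (((n - s.card)! : ℕ) : ℝ) * (((n - t.card)! : ℕ) : ℝ) / ((n:ℝ) - K) := by
            ring
    have hone : (1:ℝ) ≤ ((m :: M').length : ℝ) := by
      have : (1:ℕ) ≤ (m :: M').length := by simp [List.length_cons]
      exact_mod_cast this
    have hcoef : β * (((n - s.card)! : ℕ) : ℝ) * (((n - t.card)! : ℕ) : ℝ) / ((n:ℝ) - K)
        ≤ ((m :: M').length : ℝ) * β * (((n - s.card)! : ℕ) : ℝ) * (((n - t.card)! : ℕ) : ℝ)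
          / ((n:ℝ) - K) := by
      rw [div_eq_mul_inv, div_eq_mul_inv]
      apply mul_le_mul_of_nonneg_right _ (inv_nonneg.2 hnK.le)
      nlinarith [mul_nonneg (mul_nonneg hβ hF1) hF2, hone]
    have hfactL : (((n - s.card)! : ℕ) : ℝ)
        = ((n - s.card : ℕ) : ℝ) * (((n - (s.card+1))! : ℕ) : ℝ) := by
      have h1 : n - s.card = (n - (s.card+1)) + 1 := by omega
      have h2 : (n - s.card)! = (n - s.card) * (n - (s.card+1))! := by
        rw [h1, Nat.factorial_succ]
      exact_mod_cast h2
    have hfactR : (((n - t.card)! : ℕ) : ℝ)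
        = ((n - t.card : ℕ) : ℝ) * (((n - (t.card+1))! : ℕ) : ℝ) := by
      have h1 : n - t.card = (n - (t.card+1)) + 1 := by omega
      have h2 : (n - t.card)! = (n - t.card) * (n - (t.card+1))! := by
        rw [h1, Nat.factorial_succ]
      exact_mod_cast h2
    have hlencons : ((m :: M').length : ℝ) = (M'.length : ℝ) + 1 := by
      push_cast [List.length_cons]
      ring
    by_cases hf : m.fwd = true
    · -- FORWARD move
      have hexf : ∃ m' ∈ m :: M', m'.fwd = true := ⟨m, List.mem_cons_self, hf⟩
      by_cases hl : m.ltr = true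
      · -- forward, first permutation
        by_cases hdet : ∃ q ∈ s, q.1 = c
        · obtain ⟨⟨q1, q2⟩, hq, hqc⟩ := hdet
          dsimp at hqc
          rw [hqc] at hq
          have hbne : q2 ≠ p := by
            intro h
            rw [h] at hq
            exact (hVp hexf c).1 hq
          rw [det_fwd_left hl hf hq M' p]
          by_cases hM' : M' = []
          · subst hM'
            have hempty : ((G ∩ ExtP s t).filter fun z => walk z ([] : List Mv) q2 = p) = ∅ := by
              apply Finset.filter_false_of_mem
              intro z _
              simpa [walk] using hbne
            rw [hempty]
            simpa using hRHS
          · refine le_trans (ih hM' s t q2 hs ht (by omega) hph.1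
              (by rw [← getLast?_cons_ne (m := m) hM']; exact hlast)
              hA
              (fun hex => hVp (match hex with
                | ⟨m', hm', hf'⟩ => ⟨m', List.mem_cons_of_mem m hm', hf'⟩))
              (fun hcp _ => absurd hcp hbne)) hmono
        · -- fresh forward-left
          push_neg at hdet
          by_cases hM' : M' = []
          · subst hM'
            have hset : ((G ∩ ExtP s t).filter fun z => walk z [m] c = p)
                = G ∩ ExtP (insert (c, p) s) t := by
              ext z
              simp only [Finset.mem_filter, Finset.mem_inter, mem_ExtP,
                Finset.forall_mem_insert]
              constructor
              · rintro ⟨⟨hG, hs1, ht1⟩, hw⟩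
                have hww : walk z [m] c = z.1 c := by simp [walk, applyMv, hl, hf]
                rw [hww] at hw
                exact ⟨hG, ⟨hw, hs1⟩, ht1⟩
              · rintro ⟨hG, ⟨hcp, hs1⟩, ht1⟩
                exact ⟨⟨hG, hs1, ht1⟩, by simp [walk, applyMv, hl, hf, hcp]⟩
            rw [hset]
            rcases pinj_insert_cases hs c p with hmem | ⟨hPI, hcard⟩ | hemp
            · exact absurd hmem (hVp hexf c).1
            · exact le_trans (le_trans (hpayL _ hPI hcard) hPleL) hcoef
            · rw [ExtP_empty_left hemp, Finset.inter_empty]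
              simpa using hRHS
          · -- step fresh forward-left
            have hcardsum : ((G ∩ ExtP s t).filter fun z => walk z (m :: M') c = p).card
                = ∑ b : Fin n,
                  ((G ∩ ExtP (insert (c, b) s) t).filter fun z => walk z M' b = p).card := by
              rw [Finset.card_eq_sum_card_fiberwise
                (f := fun z : Perm (Fin n) × Perm (Fin n) => z.1 c) (t := Finset.univ)
                (fun x _ => Finset.mem_univ _)]
              refine Finset.sum_congr rfl fun b _ => ?_
              rw [Finset.filter_filter]
              exact congrArg Finset.card (fiber_fwd_left hl hf M' c b p)
            rw [hcardsum]
            have hQnn : (0:ℝ) ≤ (M'.length : ℝ) * β * (((n - (s.card+1))! : ℕ) : ℝ)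
                * (((n - t.card)! : ℕ) : ℝ) / ((n:ℝ) - K) := by
              apply div_nonneg _ hnK.le
              exact mul_nonneg (mul_nonneg (mul_nonneg (Nat.cast_nonneg _) hβ) hG1) hF2
            refine le_trans (sum_bound p _
              (Finset.univ.filter fun b : Fin n => ∀ q ∈ s, q.2 ≠ b)
              (β * (((n - (s.card+1))! : ℕ) : ℝ) * (((n - t.card)! : ℕ) : ℝ))
              ((M'.length : ℝ) * β * (((n - (s.card+1))! : ℕ) : ℝ)
                * (((n - t.card)! : ℕ) : ℝ) / ((n:ℝ) - K))
              hQnn ?_ ?_ ?_) ?_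
            · -- the p-fiber
              rcases pinj_insert_cases hs c p with hmem | ⟨hPI, hcard⟩ | hemp
              · exact absurd hmem (hVp hexf c).1
              · refine le_trans ?_ (hpayL _ hPI hcard)
                exact_mod_cast Nat.cast_le.2 (Finset.card_le_card (Finset.filter_subset _ _))
              · rw [ExtP_empty_left hemp, Finset.inter_empty, Finset.filter_empty]
                simpa using mul_nonneg (mul_nonneg hβ hG1) hF2
            · -- zero outside admissible
              intro b hbp hbA
              have hex : ∃ q ∈ s, q.2 = b := by
                by_contra hno
                push_neg at hno
                exact hbA (Finset.mem_filter.2 ⟨Finset.mem_univ _, hno⟩)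
              obtain ⟨q, hq, hq2⟩ := hex
              rw [ExtP_empty_left ⟨q, hq, Or.inr ⟨hq2, hdet q hq⟩⟩, Finset.inter_empty,
                Finset.filter_empty, Finset.card_empty]
            · -- generic fiber bound
              intro b hbp
              rcases pinj_insert_cases hs c b with hmem | ⟨hPI, hcard⟩ | hemp
              · exact absurd (hdet (c, b) hmem) (fun h => h rfl)
              · have hres := ih hM' (insert (c, b) s) t b hPI ht
                  (by rw [hcard]; omega) hph.1
                  (by rw [← getLast?_cons_ne (m := m) hM']; exact hlast)
                  (by
                    intro b'
                    constructor
                    · intro hmem'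
                      rcases Finset.mem_insert.1 hmem' with heq | hmem''
                      · rw [Prod.mk.injEq] at heq
                        have hcp : c = p := heq.1.symm
                        have hhead := (hDp hcp hexf).1 m rfl
                        rw [← hhead]
                        exact hl
                      · exact (hA b').1 hmem''
                    · exact (hA b').2)
                  (by
                    intro hex a
                    have hold := hVp hexf a
                    constructor
                    · intro hmem'
                      rcases Finset.mem_insert.1 hmem' with heq | hmem''
                      · rw [Prod.mk.injEq] at heq
                        exact hbp heq.2.symm
                      · exact hold.1 hmem''
                    · exact hold.2)
                  (fun hcp _ => absurd hcp hbp)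
                rw [hcard] at hres
                exact hres
              · rw [ExtP_empty_left hemp, Finset.inter_empty, Finset.filter_empty,
                  Finset.card_empty]
                exact_mod_cast hQnn
            · -- final arithmetic
              rw [card_compl_snd hs]
              have hQeq : ((n - s.card : ℕ) : ℝ)
                  * ((M'.length : ℝ) * β * (((n - (s.card+1))! : ℕ) : ℝ)
                    * (((n - t.card)! : ℕ) : ℝ) / ((n:ℝ) - K))
                  = (M'.length : ℝ) * β * (((n - s.card)! : ℕ) : ℝ)
                    * (((n - t.card)! : ℕ) : ℝ) / ((n:ℝ) - K) := by
                rw [hfactL]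
                ring
              rw [hQeq]
              have hsplit2 : ((m :: M').length : ℝ) * β * (((n - s.card)! : ℕ) : ℝ)
                  * (((n - t.card)! : ℕ) : ℝ) / ((n:ℝ) - K)
                  = (M'.length : ℝ) * β * (((n - s.card)! : ℕ) : ℝ)
                    * (((n - t.card)! : ℕ) : ℝ) / ((n:ℝ) - K)
                  + β * (((n - s.card)! : ℕ) : ℝ) * (((n - t.card)! : ℕ) : ℝ) / ((n:ℝ) - K) := by
                rw [hlencons]
                ring
              rw [hsplit2]
              linarith [hPleL]
      · -- forward, second permutation
        have hl' : m.ltr = false := by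
          cases hmm : m.ltr with
          | false => rfl
          | true => exact absurd hmm hl
        by_cases hdet : ∃ q ∈ t, q.1 = c
        · obtain ⟨⟨q1, q2⟩, hq, hqc⟩ := hdet
          dsimp at hqc
          rw [hqc] at hq
          have hbne : q2 ≠ p := by
            intro h
            rw [h] at hq
            exact (hVp hexf c).2 hq
          rw [det_fwd_right hl' hf hq M' p]
          by_cases hM' : M' = []
          · subst hM'
            have hempty : ((G ∩ ExtP s t).filter fun z => walk z ([] : List Mv) q2 = p) = ∅ := by
              apply Finset.filter_false_of_mem
              intro z _
              simpa [walk] using hbne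
            rw [hempty]
            simpa using hRHS
          · refine le_trans (ih hM' s t q2 hs ht (by omega) hph.1
              (by rw [← getLast?_cons_ne (m := m) hM']; exact hlast)
              hA
              (fun hex => hVp (match hex with
                | ⟨m', hm', hf'⟩ => ⟨m', List.mem_cons_of_mem m hm', hf'⟩))
              (fun hcp _ => absurd hcp hbne)) hmono
        · push_neg at hdet
          by_cases hM' : M' = []
          · subst hM'
            have hset : ((G ∩ ExtP s t).filter fun z => walk z [m] c = p)
                = G ∩ ExtP s (insert (c, p) t) := by
              ext z
              simp only [Finset.mem_filter, Finset.mem_inter, mem_ExtP,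
                Finset.forall_mem_insert]
              constructor
              · rintro ⟨⟨hG, hs1, ht1⟩, hw⟩
                have hww : walk z [m] c = z.2 c := by simp [walk, applyMv, hl', hf]
                rw [hww] at hw
                exact ⟨hG, hs1, ⟨hw, ht1⟩⟩
              · rintro ⟨hG, hs1, hcp, ht1⟩
                exact ⟨⟨hG, hs1, ht1⟩, by simp [walk, applyMv, hl', hf, hcp]⟩
            rw [hset]
            rcases pinj_insert_cases ht c p with hmem | ⟨hPI, hcard⟩ | hemp
            · exact absurd hmem (hVp hexf c).2
            · exact le_trans (le_trans (hpayR _ hPI hcard) hPleR) hcoef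
            · rw [ExtP_empty_right hemp, Finset.inter_empty]
              simpa using hRHS
          · have hcardsum : ((G ∩ ExtP s t).filter fun z => walk z (m :: M') c = p).card
                = ∑ b : Fin n,
                  ((G ∩ ExtP s (insert (c, b) t)).filter fun z => walk z M' b = p).card := by
              rw [Finset.card_eq_sum_card_fiberwise
                (f := fun z : Perm (Fin n) × Perm (Fin n) => z.2 c) (t := Finset.univ)
                (fun x _ => Finset.mem_univ _)]
              refine Finset.sum_congr rfl fun b _ => ?_
              rw [Finset.filter_filter]
              exact congrArg Finset.card (fiber_fwd_right hl' hf M' c b p)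
            rw [hcardsum]
            have hQnn : (0:ℝ) ≤ (M'.length : ℝ) * β * (((n - s.card)! : ℕ) : ℝ)
                * (((n - (t.card+1))! : ℕ) : ℝ) / ((n:ℝ) - K) := by
              apply div_nonneg _ hnK.le
              exact mul_nonneg (mul_nonneg (mul_nonneg (Nat.cast_nonneg _) hβ) hF1) hG2
            refine le_trans (sum_bound p _
              (Finset.univ.filter fun b : Fin n => ∀ q ∈ t, q.2 ≠ b)
              (β * (((n - s.card)! : ℕ) : ℝ) * (((n - (t.card+1))! : ℕ) : ℝ))
              ((M'.length : ℝ) * β * (((n - s.card)! : ℕ) : ℝ)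
                * (((n - (t.card+1))! : ℕ) : ℝ) / ((n:ℝ) - K))
              hQnn ?_ ?_ ?_) ?_
            · rcases pinj_insert_cases ht c p with hmem | ⟨hPI, hcard⟩ | hemp
              · exact absurd hmem (hVp hexf c).2
              · refine le_trans ?_ (hpayR _ hPI hcard)
                exact_mod_cast Nat.cast_le.2 (Finset.card_le_card (Finset.filter_subset _ _))
              · rw [ExtP_empty_right hemp, Finset.inter_empty, Finset.filter_empty]
                simpa using mul_nonneg (mul_nonneg hβ hF1) hG2
            · intro b hbp hbA
              have hex : ∃ q ∈ t, q.2 = b := by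
                by_contra hno
                push_neg at hno
                exact hbA (Finset.mem_filter.2 ⟨Finset.mem_univ _, hno⟩)
              obtain ⟨q, hq, hq2⟩ := hex
              rw [ExtP_empty_right ⟨q, hq, Or.inr ⟨hq2, hdet q hq⟩⟩, Finset.inter_empty,
                Finset.filter_empty, Finset.card_empty]
            · intro b hbp
              rcases pinj_insert_cases ht c b with hmem | ⟨hPI, hcard⟩ | hemp
              · exact absurd (hdet (c, b) hmem) (fun h => h rfl)
              · have hres := ih hM' s (insert (c, b) t) b hs hPI
                  (by rw [hcard]; omega) hph.1
                  (by rw [← getLast?_cons_ne (m := m) hM']; exact hlast)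
                  (by
                    intro b'
                    constructor
                    · exact (hA b').1
                    · intro hmem'
                      rcases Finset.mem_insert.1 hmem' with heq | hmem''
                      · rw [Prod.mk.injEq] at heq
                        have hcp : c = p := heq.1.symm
                        have hhead := (hDp hcp hexf).1 m rfl
                        rw [← hhead]
                        exact hl'
                      · exact (hA b').2 hmem'')
                  (by
                    intro hex a
                    have hold := hVp hexf a
                    constructor
                    · exact hold.1
                    · intro hmem'
                      rcases Finset.mem_insert.1 hmem' with heq | hmem''
                      · rw [Prod.mk.injEq] at heq
                        exact hbp heq.2.symm
                      · exact hold.2 hmem'')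
                  (fun hcp _ => absurd hcp hbp)
                rw [hcard] at hres
                exact hres
              · rw [ExtP_empty_right hemp, Finset.inter_empty, Finset.filter_empty,
                  Finset.card_empty]
                exact_mod_cast hQnn
            · rw [card_compl_snd ht]
              have hQeq : ((n - t.card : ℕ) : ℝ)
                  * ((M'.length : ℝ) * β * (((n - s.card)! : ℕ) : ℝ)
                    * (((n - (t.card+1))! : ℕ) : ℝ) / ((n:ℝ) - K))
                  = (M'.length : ℝ) * β * (((n - s.card)! : ℕ) : ℝ)
                    * (((n - t.card)! : ℕ) : ℝ) / ((n:ℝ) - K) := by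
                rw [hfactR]
                ring
              rw [hQeq]
              have hsplit2 : ((m :: M').length : ℝ) * β * (((n - s.card)! : ℕ) : ℝ)
                  * (((n - t.card)! : ℕ) : ℝ) / ((n:ℝ) - K)
                  = (M'.length : ℝ) * β * (((n - s.card)! : ℕ) : ℝ)
                    * (((n - t.card)! : ℕ) : ℝ) / ((n:ℝ) - K)
                  + β * (((n - s.card)! : ℕ) : ℝ) * (((n - t.card)! : ℕ) : ℝ) / ((n:ℝ) - K) := by
                rw [hlencons]
                ring
              rw [hsplit2]
              linarith [hPleR]
    · -- BACKWARD move
      have hf' : m.fwd = false := by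
        cases hmm : m.fwd with
        | false => rfl
        | true => exact absurd hmm hf
      have hnofwd : ∀ m' ∈ M', m'.fwd = false := hph.2 hf'
      have hguard : ¬∃ m' ∈ M', m'.fwd = true := by
        rintro ⟨m', hm', hft⟩
        rw [hnofwd m' hm'] at hft
        exact Bool.false_ne_true hft
      by_cases hl : m.ltr = true
      · -- backward, first permutation
        by_cases hdet : ∃ q ∈ s, q.2 = c
        · obtain ⟨⟨a, c2⟩, hq, hqc⟩ := hdet
          dsimp at hqc
          rw [hqc] at hq
          rw [det_bwd_left hl hf' hq M' p]
          by_cases hM' : M' = []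
          · subst hM'
            have hane : a ≠ p := by
              intro h
              rw [h] at hq
              have hg := (hA c).1 hq
              have hlast' := hlast m rfl hf'
              exact hlast' (hl.trans hg.symm)
            have hempty : ((G ∩ ExtP s t).filter fun z => walk z ([] : List Mv) a = p) = ∅ := by
              apply Finset.filter_false_of_mem
              intro z _
              simpa [walk] using hane
            rw [hempty]
            simpa using hRHS
          · refine le_trans (ih hM' s t a hs ht (by omega) hph.1
              (by rw [← getLast?_cons_ne (m := m) hM']; exact hlast)
              hA
              (fun hex => absurd hex hguard)
              (fun _ hex => absurd hex hguard)) hmono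
        · push_neg at hdet
          by_cases hM' : M' = []
          · subst hM'
            have hset : ((G ∩ ExtP s t).filter fun z => walk z [m] c = p)
                = G ∩ ExtP (insert (p, c) s) t := by
              ext z
              simp only [Finset.mem_filter, Finset.mem_inter, mem_ExtP,
                Finset.forall_mem_insert]
              constructor
              · rintro ⟨⟨hG, hs1, ht1⟩, hw⟩
                have hww : walk z [m] c = z.1⁻¹ c := by simp [walk, applyMv, hl, hf']
                rw [hww] at hw
                exact ⟨hG, ⟨inv_fiber.1 hw, hs1⟩, ht1⟩
              · rintro ⟨hG, ⟨hpc, hs1⟩, ht1⟩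
                refine ⟨⟨hG, hs1, ht1⟩, ?_⟩
                have : z.1⁻¹ c = p := inv_fiber.2 hpc
                simp [walk, applyMv, hl, hf', this]
            rw [hset]
            rcases pinj_insert_cases hs p c with hmem | ⟨hPI, hcard⟩ | hemp
            · exact absurd rfl (hdet (p, c) hmem)
            · exact le_trans (le_trans (hpayL _ hPI hcard) hPleL) hcoef
            · rw [ExtP_empty_left hemp, Finset.inter_empty]
              simpa using hRHS
          · have hcardsum : ((G ∩ ExtP s t).filter fun z => walk z (m :: M') c = p).card
                = ∑ a : Fin n,
                  ((G ∩ ExtP (insert (a, c) s) t).filter fun z => walk z M' a = p).card := by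
              rw [Finset.card_eq_sum_card_fiberwise
                (f := fun z : Perm (Fin n) × Perm (Fin n) => z.1⁻¹ c) (t := Finset.univ)
                (fun x _ => Finset.mem_univ _)]
              refine Finset.sum_congr rfl fun a _ => ?_
              rw [Finset.filter_filter]
              exact congrArg Finset.card (fiber_bwd_left hl hf' M' c a p)
            rw [hcardsum]
            have hQnn : (0:ℝ) ≤ (M'.length : ℝ) * β * (((n - (s.card+1))! : ℕ) : ℝ)
                * (((n - t.card)! : ℕ) : ℝ) / ((n:ℝ) - K) := by
              apply div_nonneg _ hnK.le
              exact mul_nonneg (mul_nonneg (mul_nonneg (Nat.cast_nonneg _) hβ) hG1) hF2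
            refine le_trans (sum_bound p _
              (Finset.univ.filter fun a : Fin n => ∀ q ∈ s, q.1 ≠ a)
              (β * (((n - (s.card+1))! : ℕ) : ℝ) * (((n - t.card)! : ℕ) : ℝ))
              ((M'.length : ℝ) * β * (((n - (s.card+1))! : ℕ) : ℝ)
                * (((n - t.card)! : ℕ) : ℝ) / ((n:ℝ) - K))
              hQnn ?_ ?_ ?_) ?_
            · rcases pinj_insert_cases hs p c with hmem | ⟨hPI, hcard⟩ | hemp
              · exact absurd rfl (hdet (p, c) hmem)
              · refine le_trans ?_ (hpayL _ hPI hcard)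
                exact_mod_cast Nat.cast_le.2 (Finset.card_le_card (Finset.filter_subset _ _))
              · rw [ExtP_empty_left hemp, Finset.inter_empty, Finset.filter_empty]
                simpa using mul_nonneg (mul_nonneg hβ hG1) hF2
            · intro a hap haA
              have hex : ∃ q ∈ s, q.1 = a := by
                by_contra hno
                push_neg at hno
                exact haA (Finset.mem_filter.2 ⟨Finset.mem_univ _, hno⟩)
              obtain ⟨q, hq, hq1⟩ := hex
              rw [ExtP_empty_left ⟨q, hq, Or.inl ⟨hq1, hdet q hq⟩⟩, Finset.inter_empty,
                Finset.filter_empty, Finset.card_empty]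
            · intro a hap
              rcases pinj_insert_cases hs a c with hmem | ⟨hPI, hcard⟩ | hemp
              · exact absurd rfl (hdet (a, c) hmem)
              · have hres := ih hM' (insert (a, c) s) t a hPI ht
                  (by rw [hcard]; omega) hph.1
                  (by rw [← getLast?_cons_ne (m := m) hM']; exact hlast)
                  (by
                    intro b'
                    constructor
                    · intro hmem'
                      rcases Finset.mem_insert.1 hmem' with heq | hmem''
                      · rw [Prod.mk.injEq] at heq
                        exact absurd heq.1.symm hap
                      · exact (hA b').1 hmem''
                    · exact (hA b').2)
                  (fun hex => absurd hex hguard)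
                  (fun _ hex => absurd hex hguard)
                rw [hcard] at hres
                exact hres
              · rw [ExtP_empty_left hemp, Finset.inter_empty, Finset.filter_empty,
                  Finset.card_empty]
                exact_mod_cast hQnn
            · rw [card_compl_fst hs]
              have hQeq : ((n - s.card : ℕ) : ℝ)
                  * ((M'.length : ℝ) * β * (((n - (s.card+1))! : ℕ) : ℝ)
                    * (((n - t.card)! : ℕ) : ℝ) / ((n:ℝ) - K))
                  = (M'.length : ℝ) * β * (((n - s.card)! : ℕ) : ℝ)
                    * (((n - t.card)! : ℕ) : ℝ) / ((n:ℝ) - K) := by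
                rw [hfactL]
                ring
              rw [hQeq]
              have hsplit2 : ((m :: M').length : ℝ) * β * (((n - s.card)! : ℕ) : ℝ)
                  * (((n - t.card)! : ℕ) : ℝ) / ((n:ℝ) - K)
                  = (M'.length : ℝ) * β * (((n - s.card)! : ℕ) : ℝ)
                    * (((n - t.card)! : ℕ) : ℝ) / ((n:ℝ) - K)
                  + β * (((n - s.card)! : ℕ) : ℝ) * (((n - t.card)! : ℕ) : ℝ) / ((n:ℝ) - K) := by
                rw [hlencons]
                ring
              rw [hsplit2]
              linarith [hPleL]
      · -- backward, second permutation
        have hl' : m.ltr = false := by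
          cases hmm : m.ltr with
          | false => rfl
          | true => exact absurd hmm hl
        by_cases hdet : ∃ q ∈ t, q.2 = c
        · obtain ⟨⟨a, c2⟩, hq, hqc⟩ := hdet
          dsimp at hqc
          rw [hqc] at hq
          rw [det_bwd_right hl' hf' hq M' p]
          by_cases hM' : M' = []
          · subst hM'
            have hane : a ≠ p := by
              intro h
              rw [h] at hq
              have hg := (hA c).2 hq
              have hlast' := hlast m rfl hf'
              exact hlast' (hl'.trans hg.symm)
            have hempty : ((G ∩ ExtP s t).filter fun z => walk z ([] : List Mv) a = p) = ∅ := by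
              apply Finset.filter_false_of_mem
              intro z _
              simpa [walk] using hane
            rw [hempty]
            simpa using hRHS
          · refine le_trans (ih hM' s t a hs ht (by omega) hph.1
              (by rw [← getLast?_cons_ne (m := m) hM']; exact hlast)
              hA
              (fun hex => absurd hex hguard)
              (fun _ hex => absurd hex hguard)) hmono
        · push_neg at hdet
          by_cases hM' : M' = []
          · subst hM'
            have hset : ((G ∩ ExtP s t).filter fun z => walk z [m] c = p)
                = G ∩ ExtP s (insert (p, c) t) := by
              ext z
              simp only [Finset.mem_filter, Finset.mem_inter, mem_ExtP,
                Finset.forall_mem_insert]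
              constructor
              · rintro ⟨⟨hG, hs1, ht1⟩, hw⟩
                have hww : walk z [m] c = z.2⁻¹ c := by simp [walk, applyMv, hl', hf']
                rw [hww] at hw
                exact ⟨hG, hs1, ⟨inv_fiber.1 hw, ht1⟩⟩
              · rintro ⟨hG, hs1, hpc, ht1⟩
                refine ⟨⟨hG, hs1, ht1⟩, ?_⟩
                have : z.2⁻¹ c = p := inv_fiber.2 hpc
                simp [walk, applyMv, hl', hf', this]
            rw [hset]
            rcases pinj_insert_cases ht p c with hmem | ⟨hPI, hcard⟩ | hemp
            · exact absurd rfl (hdet (p, c) hmem)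
            · exact le_trans (le_trans (hpayR _ hPI hcard) hPleR) hcoef
            · rw [ExtP_empty_right hemp, Finset.inter_empty]
              simpa using hRHS
          · have hcardsum : ((G ∩ ExtP s t).filter fun z => walk z (m :: M') c = p).card
                = ∑ a : Fin n,
                  ((G ∩ ExtP s (insert (a, c) t)).filter fun z => walk z M' a = p).card := by
              rw [Finset.card_eq_sum_card_fiberwise
                (f := fun z : Perm (Fin n) × Perm (Fin n) => z.2⁻¹ c) (t := Finset.univ)
                (fun x _ => Finset.mem_univ _)]
              refine Finset.sum_congr rfl fun a _ => ?_
              rw [Finset.filter_filter]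
              exact congrArg Finset.card (fiber_bwd_right hl' hf' M' c a p)
            rw [hcardsum]
            have hQnn : (0:ℝ) ≤ (M'.length : ℝ) * β * (((n - s.card)! : ℕ) : ℝ)
                * (((n - (t.card+1))! : ℕ) : ℝ) / ((n:ℝ) - K) := by
              apply div_nonneg _ hnK.le
              exact mul_nonneg (mul_nonneg (mul_nonneg (Nat.cast_nonneg _) hβ) hF1) hG2
            refine le_trans (sum_bound p _
              (Finset.univ.filter fun a : Fin n => ∀ q ∈ t, q.1 ≠ a)
              (β * (((n - s.card)! : ℕ) : ℝ) * (((n - (t.card+1))! : ℕ) : ℝ))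
              ((M'.length : ℝ) * β * (((n - s.card)! : ℕ) : ℝ)
                * (((n - (t.card+1))! : ℕ) : ℝ) / ((n:ℝ) - K))
              hQnn ?_ ?_ ?_) ?_
            · rcases pinj_insert_cases ht p c with hmem | ⟨hPI, hcard⟩ | hemp
              · exact absurd rfl (hdet (p, c) hmem)
              · refine le_trans ?_ (hpayR _ hPI hcard)
                exact_mod_cast Nat.cast_le.2 (Finset.card_le_card (Finset.filter_subset _ _))
              · rw [ExtP_empty_right hemp, Finset.inter_empty, Finset.filter_empty]
                simpa using mul_nonneg (mul_nonneg hβ hF1) hG2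
            · intro a hap haA
              have hex : ∃ q ∈ t, q.1 = a := by
                by_contra hno
                push_neg at hno
                exact haA (Finset.mem_filter.2 ⟨Finset.mem_univ _, hno⟩)
              obtain ⟨q, hq, hq1⟩ := hex
              rw [ExtP_empty_right ⟨q, hq, Or.inl ⟨hq1, hdet q hq⟩⟩, Finset.inter_empty,
                Finset.filter_empty, Finset.card_empty]
            · intro a hap
              rcases pinj_insert_cases ht a c with hmem | ⟨hPI, hcard⟩ | hemp
              · exact absurd rfl (hdet (a, c) hmem)
              · have hres := ih hM' s (insert (a, c) t) a hs hPI
                  (by rw [hcard]; omega) hph.1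
                  (by rw [← getLast?_cons_ne (m := m) hM']; exact hlast)
                  (by
                    intro b'
                    constructor
                    · exact (hA b').1
                    · intro hmem'
                      rcases Finset.mem_insert.1 hmem' with heq | hmem''
                      · rw [Prod.mk.injEq] at heq
                        exact absurd heq.1.symm hap
                      · exact (hA b').2 hmem'')
                  (fun hex => absurd hex hguard)
                  (fun _ hex => absurd hex hguard)
                rw [hcard] at hres
                exact hres
              · rw [ExtP_empty_right hemp, Finset.inter_empty, Finset.filter_empty,
                  Finset.card_empty]
                exact_mod_cast hQnn
            · rw [card_compl_fst ht]
              have hQeq : ((n - t.card : ℕ) : ℝ)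
                  * ((M'.length : ℝ) * β * (((n - s.card)! : ℕ) : ℝ)
                    * (((n - (t.card+1))! : ℕ) : ℝ) / ((n:ℝ) - K))
                  = (M'.length : ℝ) * β * (((n - s.card)! : ℕ) : ℝ)
                    * (((n - t.card)! : ℕ) : ℝ) / ((n:ℝ) - K) := by
                rw [hfactR]
                ring
              rw [hQeq]
              have hsplit2 : ((m :: M').length : ℝ) * β * (((n - s.card)! : ℕ) : ℝ)
                  * (((n - t.card)! : ℕ) : ℝ) / ((n:ℝ) - K)
                  = (M'.length : ℝ) * β * (((n - s.card)! : ℕ) : ℝ)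
                    * (((n - t.card)! : ℕ) : ℝ) / ((n:ℝ) - K)
                  + β * (((n - s.card)! : ℕ) : ℝ) * (((n - t.card)! : ℕ) : ℝ) / ((n:ℝ) - K) := by
                rw [hlencons]
                ring
              rw [hsplit2]
              linarith [hPleR]

def evalW (w : List Bool) (z : Perm (Fin n) × Perm (Fin n)) : Perm (Fin n) :=
  (w.map fun b => if b then z.1 else z.2).prod

theorem evalW_append (w1 w2 : List Bool) (z : Perm (Fin n) × Perm (Fin n)) :
    evalW (w1 ++ w2) z = evalW w1 z * evalW w2 z := by
  simp [evalW, List.map_append, List.prod_append]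

theorem walk_fwd (z : Perm (Fin n) × Perm (Fin n)) (v : List Bool) (c : Fin n) :
    walk z (v.reverse.map fun l => (⟨l, true⟩ : Mv)) c = evalW v z c := by
  induction v generalizing c with
  | nil => simp [walk, evalW]
  | cons l w iw =>
    rw [List.reverse_cons, List.map_append, walk_append]
    have h1 : walk z ([⟨l, true⟩] : List Mv) (walk z (w.reverse.map fun l => (⟨l, true⟩ : Mv)) c)
        = (if l then z.1 else z.2) (evalW w z c) := by
      rw [iw]
      simp [walk, applyMv]
    rw [show List.map (fun l => (⟨l, true⟩ : Mv)) [l] = [(⟨l, true⟩ : Mv)] from rfl, h1]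
    cases l <;> simp [evalW, Equiv.Perm.mul_apply]

theorem walk_bwd (z : Perm (Fin n) × Perm (Fin n)) (w : List Bool) (c : Fin n) :
    walk z (w.map fun l => (⟨l, false⟩ : Mv)) c = (evalW w z)⁻¹ c := by
  induction w generalizing c with
  | nil => simp [walk, evalW]
  | cons l w iw =>
    show walk z _ (applyMv z ⟨l, false⟩ c) = _
    rw [iw]
    have h2 : evalW (l :: w) z = (if l then z.1 else z.2) * evalW w z := by
      simp [evalW]
    rw [h2, mul_inv_rev]
    simp [applyMv, Equiv.Perm.mul_apply]

theorem walk_full (z : Perm (Fin n) × Perm (Fin n)) (v v' : List Bool) (c : Fin n)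
    (h : evalW v z = evalW v' z) :
    walk z ((v.reverse.map fun l => (⟨l, true⟩ : Mv)) ++ (v'.map fun l => (⟨l, false⟩ : Mv))) c
      = c := by
  rw [walk_append, walk_fwd, walk_bwd, ← h]
  simp

theorem phased_all_bwd (B : List Mv) (hB : ∀ m ∈ B, m.fwd = false) : Phased B := by
  induction B with
  | nil => trivial
  | cons b B ihb =>
    exact ⟨ihb (fun m hm => hB m (List.mem_cons_of_mem b hm)),
      fun _ m hm => hB m (List.mem_cons_of_mem b hm)⟩

theorem phased_append (F B : List Mv) (hF : ∀ m ∈ F, m.fwd = true)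
    (hB : ∀ m ∈ B, m.fwd = false) : Phased (F ++ B) := by
  induction F with
  | nil => exact phased_all_bwd B hB
  | cons f F ihf =>
    refine ⟨ihf (fun m hm => hF m (List.mem_cons_of_mem f hm)), fun hff => ?_⟩
    have := hF f (List.mem_cons_self)
    rw [this] at hff
    exact absurd hff (by simp)

theorem roundLemma (r mm : ℕ) (hr : 1 ≤ r) (hm : 1 ≤ mm) (hn4 : 4 * r * mm ≤ n)
    (v v' : List Bool) (hv : v ≠ []) (hvv' : v.length + v'.length ≤ 2*r - 2)
    (hlastd : v' = [] ∨ (∃ a b, v.getLast? = some a ∧ v'.getLast? = some b ∧ a ≠ b)) :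
    ∀ j, j ≤ mm → ∀ s t : Finset (Fin n × Fin n), PInj s → PInj t →
      s.card + t.card + (2*r - 2) * j ≤ (2*r - 2) * mm →
      (((Finset.univ.filter fun z : Perm (Fin n) × Perm (Fin n) => evalW v z = evalW v' z)
         ∩ ExtP s t).card : ℝ)
        ≤ ((4*(r:ℝ))/(n : ℝ))^j * (((n - s.card)! : ℕ) : ℝ) * (((n - t.card)! : ℕ) : ℝ) := by
  have hn0 : 0 < n := by
    have h4 : 4 * 1 * 1 ≤ 4 * r * mm := Nat.mul_le_mul (Nat.mul_le_mul (le_refl 4) hr) hm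
    omega
  have hnr : (0:ℝ) < (n:ℝ) := by exact_mod_cast hn0
  intro j
  induction j with
  | zero =>
    intro _ s t hs ht _
    rw [pow_zero, one_mul]
    have h1 : ((Finset.univ.filter fun z : Perm (Fin n) × Perm (Fin n) =>
        evalW v z = evalW v' z) ∩ ExtP s t).card ≤ (ExtP s t).card :=
      Finset.card_le_card Finset.inter_subset_right
    have h2 : (ExtP s t).card = (n - s.card)! * (n - t.card)! := ExtP_card hs ht
    rw [h2] at h1
    exact_mod_cast h1
  | succ j ihj =>
    intro hj1 s t hs ht hsize
    have hj : j ≤ mm := by omega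
    have ihj' := ihj hj
    have hmulsucc : (2*r-2)*(j+1) = (2*r-2)*j + (2*r-2) := Nat.mul_succ _ _
    have hKj : (2*r-2) * (mm - j) + (2*r-2) * j = (2*r-2) * mm := by
      rw [← Nat.mul_add, Nat.sub_add_cancel hj]
    have hKm1 : (2*r-2) * (mm - 1) + (2*r-2) * 1 = (2*r-2) * mm := by
      rw [← Nat.mul_add, Nat.sub_add_cancel hm]
    have hstsum : s.card + t.card ≤ (2*r-2) * (mm - 1) := by omega
    -- find a fresh point p
    set bigset := ((s.image Prod.fst) ∪ (s.image Prod.snd))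
      ∪ ((t.image Prod.fst) ∪ (t.image Prod.snd)) with hbig
    have hbigcard : bigset.card < n := by
      have h1 : bigset.card ≤ 2 * s.card + 2 * t.card := by
        calc bigset.card ≤ ((s.image Prod.fst) ∪ (s.image Prod.snd)).card
              + ((t.image Prod.fst) ∪ (t.image Prod.snd)).card := Finset.card_union_le _ _
          _ ≤ ((s.image Prod.fst).card + (s.image Prod.snd).card)
              + ((t.image Prod.fst).card + (t.image Prod.snd).card) :=
            Nat.add_le_add (Finset.card_union_le _ _) (Finset.card_union_le _ _)
          _ ≤ (s.card + s.card) + (t.card + t.card) :=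
            Nat.add_le_add (Nat.add_le_add Finset.card_image_le Finset.card_image_le)
              (Nat.add_le_add Finset.card_image_le Finset.card_image_le)
          _ = 2 * s.card + 2 * t.card := by ring
      have h2 : 2 * ((2*r-2) * (mm-1)) = (2*(2*r-2)) * (mm-1) := (Nat.mul_assoc 2 _ _).symm
      have h3 : (2*(2*r-2)) * (mm-1) ≤ (4*r) * (mm-1) := Nat.mul_le_mul_right _ (by omega)
      have h4 : (4*r) * (mm-1) + (4*r) * 1 = 4*r*mm := by
        rw [← Nat.mul_add, Nat.sub_add_cancel hm]
      omega
    have hfresh : ∃ p : Fin n, p ∉ bigset := by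
      have hpos : 0 < ((Finset.univ : Finset (Fin n)) \ bigset).card := by
        rw [Finset.card_sdiff_of_subset (Finset.subset_univ _), Finset.card_univ, Fintype.card_fin]
        omega
      obtain ⟨p, hp⟩ := Finset.card_pos.1 hpos
      exact ⟨p, (Finset.mem_sdiff.1 hp).2⟩
    obtain ⟨p, hp⟩ := hfresh
    have hps1 : ∀ b : Fin n, (p, b) ∉ s := fun b hb =>
      hp (Finset.mem_union_left _ (Finset.mem_union_left _
        (Finset.mem_image.2 ⟨(p, b), hb, rfl⟩)))
    have hps2 : ∀ a : Fin n, (a, p) ∉ s := fun a ha =>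
      hp (Finset.mem_union_left _ (Finset.mem_union_right _
        (Finset.mem_image.2 ⟨(a, p), ha, rfl⟩)))
    have hpt1 : ∀ b : Fin n, (p, b) ∉ t := fun b hb =>
      hp (Finset.mem_union_right _ (Finset.mem_union_left _
        (Finset.mem_image.2 ⟨(p, b), hb, rfl⟩)))
    have hpt2 : ∀ a : Fin n, (a, p) ∉ t := fun a ha =>
      hp (Finset.mem_union_right _ (Finset.mem_union_right _
        (Finset.mem_image.2 ⟨(a, p), ha, rfl⟩)))
    -- the move list
    set g₁ : Bool := v.getLast hv with hg₁
    set F : List Mv := v.reverse.map (fun l => (⟨l, true⟩ : Mv)) with hFd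
    set B : List Mv := v'.map (fun l => (⟨l, false⟩ : Mv)) with hBd
    set M : List Mv := F ++ B with hMd
    set K : ℕ := (2*r - 2) * (mm - j) with hKd
    set G : Finset (Perm (Fin n) × Perm (Fin n)) :=
      Finset.univ.filter fun z : Perm (Fin n) × Perm (Fin n) => evalW v z = evalW v' z with hGd
    have hFne : F ≠ [] := by
      rw [hFd]
      simp only [ne_eq, List.map_eq_nil_iff, List.reverse_eq_nil_iff]
      exact hv
    have hMne : M ≠ [] := by
      rw [hMd]
      intro hcon
      exact hFne (List.append_eq_nil_iff.1 hcon).1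
    have hMlen : M.length ≤ 2*r - 2 := by
      rw [hMd, List.length_append, hFd, hBd, List.length_map, List.length_map,
        List.length_reverse]
      omega
    have hK2 : 2 * K ≤ n := by
      have h1 : K ≤ (2*r-2) * mm := Nat.mul_le_mul_left _ (Nat.sub_le _ _)
      have h2 : 2 * ((2*r-2) * mm) = (2*(2*r-2)) * mm := (Nat.mul_assoc 2 _ _).symm
      have h3 : (2*(2*r-2)) * mm ≤ (4*r) * mm := Nat.mul_le_mul_right _ (by omega)
      omega
    have hβnn : (0:ℝ) ≤ ((4*(r:ℝ))/(n : ℝ))^j := by positivity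
    have hpay : ∀ s' t' : Finset (Fin n × Fin n), PInj s' → PInj t' →
        s'.card + t'.card ≤ K →
        ((G ∩ ExtP s' t').card : ℝ) ≤ ((4*(r:ℝ))/(n : ℝ))^j
          * (((n - s'.card)! : ℕ) : ℝ) * (((n - t'.card)! : ℕ) : ℝ) :=
      fun s' t' hs' ht' hsz => ihj' s' t' hs' ht' (by omega)
    have hFfwd : ∀ m ∈ F, m.fwd = true := by
      intro m hm
      rw [hFd] at hm
      obtain ⟨l, -, hl⟩ := List.mem_map.1 hm
      rw [← hl]
    have hBbwd : ∀ m ∈ B, m.fwd = false := by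
      intro m hm
      rw [hBd] at hm
      obtain ⟨l, -, hl⟩ := List.mem_map.1 hm
      rw [← hl]
    have hphM : Phased M := phased_append F B hFfwd hBbwd
    have hlastM : ∀ m' ∈ M.getLast?, m'.fwd = false → m'.ltr ≠ g₁ := by
      rcases hlastd with hnil | ⟨a, b, hva, hv'b, hab⟩
      · intro m' hm' hf'
        have hBnil : B = [] := by rw [hBd, hnil]; rfl
        rw [hMd, hBnil, List.append_nil] at hm'
        have hm'' : m' ∈ F := by
          rcases List.mem_getLast?_eq_getLast hm' with ⟨hne, heq⟩
          rw [heq]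
          exact List.getLast_mem hne
        rw [hFfwd m' hm''] at hf'
        exact absurd hf' (by simp)
      · intro m' hm' _
        have hBne : B ≠ [] := by
          rw [hBd]
          intro hcon
          rw [List.map_eq_nil_iff] at hcon
          rw [hcon] at hv'b
          simp at hv'b
        rw [hMd, List.getLast?_append_of_ne_nil _ hBne, hBd, List.getLast?_map, hv'b] at hm'
        have hm0 : m' = (⟨b, false⟩ : Mv) := by simpa using hm'.symm
        have hg1a : g₁ = a := by
          have h0 : v.getLast? = some g₁ := by rw [hg₁]; exact List.getLast?_eq_getLast hv
          rw [h0] at hva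
          exact Option.some.inj hva
        rw [hm0, hg1a]
        exact fun h => hab (h.symm)
    have hheadM : M.head? = some (⟨g₁, true⟩ : Mv) := by
      rw [hMd, List.head?_append]
      have h1 : F.head? = some (⟨g₁, true⟩ : Mv) := by
        rw [hFd, List.head?_map, List.head?_reverse, List.getLast?_eq_getLast hv, hg₁]
        rfl
      rw [h1]
      rfl
    have hAM : ∀ b : Fin n, ((p, b) ∈ s → g₁ = true) ∧ ((p, b) ∈ t → g₁ = false) :=
      fun b => ⟨fun hmem => absurd hmem (hps1 b), fun hmem => absurd hmem (hpt1 b)⟩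
    have hVpM : (∃ m' ∈ M, m'.fwd = true) → ∀ a : Fin n, (a, p) ∉ s ∧ (a, p) ∉ t :=
      fun _ a => ⟨hps2 a, hpt2 a⟩
    have hDpM : p = p → (∃ m' ∈ M, m'.fwd = true) →
        (∀ m' ∈ M.head?, m'.ltr = g₁) ∧ ∀ b : Fin n, (p, b) ∉ s ∧ (p, b) ∉ t := by
      intro _ _
      constructor
      · intro m' hm'
        rw [hheadM] at hm'
        have h0 : m' = (⟨g₁, true⟩ : Mv) := by simpa using hm'.symm
        rw [h0]
      · exact fun b => ⟨hps1 b, hpt1 b⟩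
    have hsizeM : s.card + t.card + M.length ≤ K := by omega
    have hrec := recLemma p g₁ K G (((4*(r:ℝ))/(n : ℝ))^j) hβnn hn0 hK2 hpay M hMne s t p
      hs ht hsizeM hphM hlastM hAM hVpM hDpM
    have hGsub : G ∩ ExtP s t = (G ∩ ExtP s t).filter (fun z => walk z M p = p) := by
      refine (Finset.filter_true_of_mem ?_).symm
      intro z hz
      have hzG : z ∈ G := (Finset.mem_inter.1 hz).1
      rw [hGd, Finset.mem_filter] at hzG
      exact walk_full z v v' p hzG.2
    rw [hGd] at hGsub ⊢
    rw [hGsub]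
    rw [hGd] at hrec
    refine le_trans hrec ?_
    have hKn : K < n := by omega
    have hnK : (0:ℝ) < (n:ℝ) - K := by
      have : (K:ℝ) < (n:ℝ) := by exact_mod_cast hKn
      linarith
    have hkey : (M.length:ℝ) / ((n:ℝ) - K) ≤ 4*(r:ℝ)/(n:ℝ) := by
      rw [div_le_div_iff₀ hnK hnr]
      have h1 : (M.length:ℝ) ≤ 2*(r:ℝ) - 2 := by
        have hc : ((2*r-2 : ℕ) : ℝ) = 2*(r:ℝ) - 2 := by
          have : (2:ℕ) ≤ 2*r := by omega
          push_cast [Nat.cast_sub this]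
          ring
        rw [← hc]
        exact_mod_cast hMlen
      have h2 : 2*(K:ℝ) ≤ (n:ℝ) := by exact_mod_cast hK2
      have hr1 : (1:ℝ) ≤ (r:ℝ) := by exact_mod_cast hr
      have e2 : (n:ℝ)/2 ≤ (n:ℝ) - K := by linarith
      have e3 : 4*(r:ℝ)*((n:ℝ)/2) ≤ 4*(r:ℝ)*((n:ℝ)-K) :=
        mul_le_mul_of_nonneg_left e2 (by positivity)
      have e1 : (M.length:ℝ) * n ≤ (2*(r:ℝ)-2) * n := mul_le_mul_of_nonneg_right h1 hnr.le
      nlinarith [e1, e3, hnr.le]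
    calc (M.length:ℝ) * (((4*(r:ℝ))/(n : ℝ))^j) * (((n - s.card)! : ℕ) : ℝ)
          * (((n - t.card)! : ℕ) : ℝ) / ((n:ℝ) - K)
        = ((M.length:ℝ)/((n:ℝ)-K)) * ((((4*(r:ℝ))/(n : ℝ))^j) * (((n - s.card)! : ℕ) : ℝ)
          * (((n - t.card)! : ℕ) : ℝ)) := by ring
      _ ≤ (4*(r:ℝ)/(n:ℝ)) * ((((4*(r:ℝ))/(n : ℝ))^j) * (((n - s.card)! : ℕ) : ℝ)
          * (((n - t.card)! : ℕ) : ℝ)) := by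
          apply mul_le_mul_of_nonneg_right hkey
          positivity
      _ = ((4*(r:ℝ))/(n : ℝ))^(j+1) * (((n - s.card)! : ℕ) : ℝ)
          * (((n - t.card)! : ℕ) : ℝ) := by
          rw [pow_succ]
          ring

theorem pinj_empty : PInj (∅ : Finset (Fin n × Fin n)) := by
  constructor <;> intro q hq <;> simp at hq

theorem stripLemma : ∀ N : ℕ, ∀ u u' : List Bool, u.length + u'.length ≤ N → u ≠ u' →
    ∃ v v' : List Bool, v ≠ [] ∧
      (v' = [] ∨ (∃ a b, v.getLast? = some a ∧ v'.getLast? = some b ∧ a ≠ b)) ∧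
      v.length + v'.length ≤ u.length + u'.length ∧
      ∀ z : Perm (Fin n) × Perm (Fin n), evalW u z = evalW u' z → evalW v z = evalW v' z := by
  intro N
  induction N with
  | zero =>
    intro u u' hlen hne
    have h1 : u = [] := List.eq_nil_of_length_eq_zero (by omega)
    have h2 : u' = [] := List.eq_nil_of_length_eq_zero (by omega)
    exact absurd (h1.trans h2.symm) hne
  | succ N ihN =>
    intro u u' hlen hne
    rcases List.eq_nil_or_concat u with rfl | ⟨u₀, a, rfl⟩
    · refine ⟨u', [], fun h => hne h.symm, Or.inl rfl, by simp, ?_⟩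
      intro z h
      simp only [evalW, List.map_nil, List.prod_nil] at h ⊢
      exact h.symm
    · simp only [List.concat_eq_append] at hne hlen ⊢
      rcases List.eq_nil_or_concat u' with rfl | ⟨u₀', b, rfl⟩
      · exact ⟨u₀ ++ [a], [], by simp, Or.inl rfl, by simp, fun z h => h⟩
      · simp only [List.concat_eq_append] at hne hlen ⊢
        by_cases hab : a = b
        · subst hab
          have hne0 : u₀ ≠ u₀' := fun h => hne (by rw [h])
          have hlen0 : u₀.length + u₀'.length ≤ N := by
            simp only [List.length_append, List.length_singleton] at hlen
            omega
          obtain ⟨v, v', h1, h2, h3, h5⟩ := ihN u₀ u₀' hlen0 hne0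
          refine ⟨v, v', h1, h2, ?_, ?_⟩
          · simp only [List.length_append, List.length_singleton]
            omega
          · intro z h
            rw [evalW_append, evalW_append] at h
            exact h5 z (mul_right_cancel h)
        · exact ⟨u₀ ++ [a], u₀' ++ [b], by simp,
            Or.inr ⟨a, b, List.getLast?_concat, List.getLast?_concat, hab⟩,
            le_refl _, fun z h => h⟩

def listsLen : ℕ → Finset (List Bool)
  | 0 => {[]}
  | (k+1) => ((Finset.univ : Finset Bool) ×ˢ listsLen k).image fun q => q.1 :: q.2

theorem mem_listsLen : ∀ k (l : List Bool), l ∈ listsLen k ↔ l.length = k := by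
  intro k
  induction k with
  | zero =>
    intro l
    simp [listsLen, List.length_eq_zero_iff]
  | succ k ihk =>
    intro l
    simp only [listsLen, Finset.mem_image, Finset.mem_product, Finset.mem_univ, true_and]
    constructor
    · rintro ⟨⟨hd, tl⟩, htl, rfl⟩
      simp [(ihk tl).1 htl]
    · intro hl
      cases l with
      | nil => simp at hl
      | cons hd tl =>
        exact ⟨(hd, tl), (ihk tl).2 (by simpa using hl), rfl⟩

theorem card_listsLen : ∀ k, (listsLen k).card ≤ 2^k := by
  intro k
  induction k with
  | zero => simp [listsLen]
  | succ k ihk =>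
    calc (listsLen (k+1)).card
        ≤ ((Finset.univ : Finset Bool) ×ˢ listsLen k).card := Finset.card_image_le
      _ = 2 * (listsLen k).card := by
          rw [Finset.card_product, Finset.card_univ, Fintype.card_bool]
      _ ≤ 2 * 2^k := by omega
      _ = 2^(k+1) := by ring

def wordsFS (r : ℕ) : Finset (List Bool) := (Finset.range r).biUnion listsLen

theorem mem_wordsFS {r : ℕ} {l : List Bool} : l ∈ wordsFS r ↔ l.length < r := by
  simp only [wordsFS, Finset.mem_biUnion, Finset.mem_range, mem_listsLen]
  constructor
  · rintro ⟨k, hk, hlk⟩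
    omega
  · intro h
    exact ⟨l.length, h, rfl⟩

theorem card_wordsFS : ∀ r, (wordsFS r).card ≤ 2^r := by
  intro r
  induction r with
  | zero =>
    simp [wordsFS]
  | succ r ihr =>
    have hsub : wordsFS (r+1) ⊆ wordsFS r ∪ listsLen r := by
      intro l hl
      rw [mem_wordsFS] at hl
      rcases Nat.lt_succ_iff_lt_or_eq.1 hl with h | h
      · exact Finset.mem_union_left _ (mem_wordsFS.2 h)
      · exact Finset.mem_union_right _ ((mem_listsLen r l).2 h)
    calc (wordsFS (r+1)).card ≤ (wordsFS r ∪ listsLen r).card := Finset.card_le_card hsub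
      _ ≤ (wordsFS r).card + (listsLen r).card := Finset.card_union_le _ _
      _ ≤ 2^r + 2^r := Nat.add_le_add ihr (card_listsLen r)
      _ = 2^(r+1) := by ring

def toB : Fin 2 → Bool := fun i => decide (i = 0)

theorem toB_inj : Function.Injective toB := by decide

theorem eval_corr (z : Perm (Fin n) × Perm (Fin n)) (u : FreeMonoid (Fin 2)) :
    FreeMonoid.lift ![z.1, z.2] u = evalW ((FreeMonoid.toList u).map toB) z := by
  rw [FreeMonoid.lift_apply, evalW, List.map_map]
  apply congrArg
  apply List.map_congr_left
  intro i _
  fin_cases i <;> simp [toB]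

theorem distinct_short_words_collision_bound (r n : ℕ) (hr : 1 ≤ r) (hn : 4 * r ≤ n) :
    (Nat.card {p : Perm (Fin n) × Perm (Fin n) //
          ∃ u u' : FreeMonoid (Fin 2), u ≠ u' ∧ u.length < r ∧ u'.length < r ∧
            FreeMonoid.lift ![p.1, p.2] u = FreeMonoid.lift ![p.1, p.2] u'} : ℝ) /
        ((n ! : ℝ)) ^ 2 ≤
      4 ^ r * ((4 * r : ℝ) / (n : ℝ)) ^ (n / (4 * r)) := by
  classical
  have hr4 : 0 < 4*r := by omega
  have hmm1 : 1 ≤ n / (4*r) := (Nat.one_le_div_iff hr4).2 hn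
  have hmmn : 4*r*(n/(4*r)) ≤ n := by
    calc 4*r*(n/(4*r)) = (n/(4*r))*(4*r) := Nat.mul_comm _ _
      _ ≤ n := Nat.div_mul_le_self n (4*r)
  have hn0 : 0 < n := by omega
  have hnr : (0:ℝ) < (n:ℝ) := by exact_mod_cast hn0
  have hfact0 : (0:ℝ) < ((n !  : ℕ) : ℝ) := by exact_mod_cast Nat.factorial_pos n
  rw [Nat.card_eq_fintype_card, Fintype.card_subtype]
  rw [div_le_iff₀ (by positivity : (0:ℝ) < ((n ! : ℝ))^2)]
  set mm := n / (4*r) with hmmd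
  have hGb : ∀ w w' : List Bool, w.length < r → w'.length < r → w ≠ w' →
      ((Finset.univ.filter fun z : Perm (Fin n) × Perm (Fin n) =>
        evalW w z = evalW w' z).card : ℝ)
      ≤ ((4*(r:ℝ))/(n:ℝ))^mm * ((n ! : ℕ) : ℝ) * ((n ! : ℕ) : ℝ) := by
    intro w w' hw hw' hnew
    obtain ⟨v, v', hvne, hlastd, hlen, htrans⟩ :=
      stripLemma (w.length + w'.length) w w' (le_refl _) hnew
    have hsub : (Finset.univ.filter fun z : Perm (Fin n) × Perm (Fin n) =>
          evalW w z = evalW w' z)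
        ⊆ Finset.univ.filter fun z : Perm (Fin n) × Perm (Fin n) =>
          evalW v z = evalW v' z := by
      intro z hz
      rw [Finset.mem_filter] at hz ⊢
      exact ⟨hz.1, htrans z hz.2⟩
    have h1 := roundLemma r mm hr hmm1 hmmn v v' hvne (by omega) hlastd mm (le_refl mm)
      ∅ ∅ pinj_empty pinj_empty (by simp)
    have hExt : ExtP (∅ : Finset (Fin n × Fin n)) ∅ = Finset.univ := by
      ext z
      simp [mem_ExtP]
    rw [hExt, Finset.inter_univ] at h1
    simp only [Finset.card_empty, Nat.sub_zero] at h1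
    exact le_trans (by exact_mod_cast Finset.card_le_card hsub) h1
  have hsub2 : (Finset.univ.filter fun p : Perm (Fin n) × Perm (Fin n) =>
      ∃ u u' : FreeMonoid (Fin 2), u ≠ u' ∧ u.length < r ∧ u'.length < r ∧
        FreeMonoid.lift ![p.1, p.2] u = FreeMonoid.lift ![p.1, p.2] u')
      ⊆ (wordsFS r ×ˢ wordsFS r).biUnion (fun q =>
          Finset.univ.filter fun z : Perm (Fin n) × Perm (Fin n) =>
            evalW q.1 z = evalW q.2 z ∧ q.1 ≠ q.2) := by
    intro z hz
    rw [Finset.mem_filter] at hz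
    obtain ⟨-, u, u', hneu, hlu, hlu', heq⟩ := hz
    rw [Finset.mem_biUnion]
    refine ⟨((FreeMonoid.toList u).map toB, (FreeMonoid.toList u').map toB), ?_, ?_⟩
    · rw [Finset.mem_product]
      constructor <;> rw [mem_wordsFS, List.length_map]
      · exact hlu
      · exact hlu'
    · rw [Finset.mem_filter]
      refine ⟨Finset.mem_univ _, ?_, ?_⟩
      · rw [← eval_corr, ← eval_corr]
        exact heq
      · intro hcon
        exact hneu (FreeMonoid.toList.injective (List.map_injective_iff.2 toB_inj hcon))
  have hterm : ∀ q ∈ wordsFS r ×ˢ wordsFS r,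
      (((Finset.univ.filter fun z : Perm (Fin n) × Perm (Fin n) =>
        evalW q.1 z = evalW q.2 z ∧ q.1 ≠ q.2).card : ℕ) : ℝ)
      ≤ ((4*(r:ℝ))/(n:ℝ))^mm * ((n ! : ℕ) : ℝ) * ((n ! : ℕ) : ℝ) := by
    intro q hq
    rw [Finset.mem_product, mem_wordsFS, mem_wordsFS] at hq
    by_cases hqq : q.1 = q.2
    · have hempty : (Finset.univ.filter fun z : Perm (Fin n) × Perm (Fin n) =>
          evalW q.1 z = evalW q.2 z ∧ q.1 ≠ q.2) = ∅ :=
        Finset.filter_false_of_mem (fun z _ h => h.2 hqq)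
      rw [hempty, Finset.card_empty]
      simp only [Nat.cast_zero]
      positivity
    · refine le_trans ?_ (hGb q.1 q.2 hq.1 hq.2 hqq)
      have hss : (Finset.univ.filter fun z : Perm (Fin n) × Perm (Fin n) =>
            evalW q.1 z = evalW q.2 z ∧ q.1 ≠ q.2)
          ⊆ Finset.univ.filter fun z : Perm (Fin n) × Perm (Fin n) =>
            evalW q.1 z = evalW q.2 z :=
        by
          intro z hz
          rw [Finset.mem_filter] at hz ⊢
          exact ⟨hz.1, hz.2.1⟩
      exact_mod_cast Finset.card_le_card hss
  have hcardW : (((wordsFS r ×ˢ wordsFS r).card : ℕ) : ℝ) ≤ 4^r := by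
    rw [Finset.card_product]
    have h1 : (wordsFS r).card * (wordsFS r).card ≤ 2^r * 2^r :=
      Nat.mul_le_mul (card_wordsFS r) (card_wordsFS r)
    have h2 : ((wordsFS r).card * (wordsFS r).card : ℝ) ≤ (2:ℝ)^r * 2^r := by
      exact_mod_cast h1
    have h3 : (2:ℝ)^r * 2^r = 4^r := by
      rw [show (4:ℝ) = 2*2 by norm_num, mul_pow]
    push_cast
    linarith
  calc ((Finset.univ.filter fun p : Perm (Fin n) × Perm (Fin n) =>
        ∃ u u' : FreeMonoid (Fin 2), u ≠ u' ∧ u.length < r ∧ u'.length < r ∧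
          FreeMonoid.lift ![p.1, p.2] u = FreeMonoid.lift ![p.1, p.2] u').card : ℝ)
      ≤ (((wordsFS r ×ˢ wordsFS r).biUnion (fun q =>
          Finset.univ.filter fun z : Perm (Fin n) × Perm (Fin n) =>
            evalW q.1 z = evalW q.2 z ∧ q.1 ≠ q.2)).card : ℝ) := by
        exact_mod_cast Finset.card_le_card hsub2
    _ ≤ ((∑ q ∈ wordsFS r ×ˢ wordsFS r,
          (Finset.univ.filter fun z : Perm (Fin n) × Perm (Fin n) =>
            evalW q.1 z = evalW q.2 z ∧ q.1 ≠ q.2).card : ℕ) : ℝ) := by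
        exact_mod_cast Finset.card_biUnion_le
    _ ≤ ((wordsFS r ×ˢ wordsFS r).card : ℝ)
          * (((4*(r:ℝ))/(n:ℝ))^mm * ((n ! : ℕ) : ℝ) * ((n ! : ℕ) : ℝ)) := by
        push_cast
        refine le_trans (Finset.sum_le_card_nsmul _ _
          (((4*(r:ℝ))/(n:ℝ))^mm * ((n ! : ℕ) : ℝ) * ((n ! : ℕ) : ℝ)) ?_) ?_
        · intro q hq
          exact_mod_cast hterm q hq
        · rw [nsmul_eq_mul]
    _ ≤ (4:ℝ)^r * (((4*(r:ℝ))/(n:ℝ))^mm * ((n ! : ℕ) : ℝ) * ((n ! : ℕ) : ℝ)) := by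
        apply mul_le_mul_of_nonneg_right hcardW
        positivity
    _ = 4 ^ r * ((4 * (r:ℝ)) / (n : ℝ)) ^ mm * ((n ! : ℝ))^2 := by
        push_cast
        ring
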